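/- Let X be a set and for each t ∈ [0, 1] let d_t be a pseudometric on X such that for all x, y ∈ X the function t ↦ d_t(x, y) is measurable. Let C ≥ 1 and suppose that for all x, y ∈ X and t, t' ∈ [0, 1] one has |d_t(x, y) − d_{t'}(x, y)| ≤ C·(1 + min{d_t(x, y), d_{t'}(x, y)})·√|t − t'|. Define d̄(x, y) := ∫₀¹ d_t(x, y) dt. Then for every A < ∞ there exists C' = C'(C, A) < ∞ such that for all x, y, x', y' ∈ X and all t, t' ∈ [0, 1] with d̄(x, y) + d̄(x, x') + d̄(y, y') < A, one has |d_t(x, y) − d_{t'}(x', y')| ≤ C'·(d̄(x, x'))^{1/3} + C'·(d̄(y, y'))^{1/3} + C'·√|t − t'|. -/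

import Mathlib

open MeasureTheory Set

/-- Let `X` be a set, `(d_t)_{t ∈ [0,1]}` a measurable-in-time family of
pseudometrics on `X`, `C ≥ 1`, with `|d_t(x,y) − d_{t'}(x,y)| ≤
C (1 + min{d_t(x,y), d_{t'}(x,y)}) √|t−t'|` for all `x, y` and `t, t' ∈ [0,1]`. With
`d̄(x,y) := ∫₀¹ d_t(x,y) dt`, for every `A < ∞` there is `C' = C'(C, A) < ∞` such that for
all `x, y, x', y'` and `t, t' ∈ [0,1]` with `d̄(x,y) + d̄(x,x') + d̄(y,y') < A` one has
`|d_t(x,y) − d_{t'}(x',y')| ≤ C' d̄(x,x')^{1/3} + C' d̄(y,y')^{1/3} + C' √|t−t'|`. -/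
theorem stmt_10 (X : Type) (d : ℝ → X → X → ℝ)
    (hnonneg : ∀ t ∈ Set.Icc (0:ℝ) 1, ∀ x y : X, 0 ≤ d t x y)
    (hself : ∀ t ∈ Set.Icc (0:ℝ) 1, ∀ x : X, d t x x = 0)
    (hsymm : ∀ t ∈ Set.Icc (0:ℝ) 1, ∀ x y : X, d t x y = d t y x)
    (htriangle : ∀ t ∈ Set.Icc (0:ℝ) 1, ∀ x y z : X, d t x z ≤ d t x y + d t y z)
    (hmeas : ∀ x y : X, Measurable (fun t => d t x y))
    (C : ℝ) (hC : 1 ≤ C)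
    (hHolder : ∀ (x y : X), ∀ t ∈ Set.Icc (0:ℝ) 1, ∀ t' ∈ Set.Icc (0:ℝ) 1,
      |d t x y - d t' x y| ≤
        C * (1 + min (d t x y) (d t' x y)) * Real.sqrt |t - t'|)
    (dbar : X → X → ℝ) (hdbar : ∀ x y : X, dbar x y = ∫ t in (0:ℝ)..1, d t x y) :
    ∀ A : ℝ, ∃ C' : ℝ, 0 < C' ∧
      ∀ (x y x' y' : X), ∀ t ∈ Set.Icc (0:ℝ) 1, ∀ t' ∈ Set.Icc (0:ℝ) 1,
        dbar x y + dbar x x' + dbar y y' < A →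
        |d t x y - d t' x' y'| ≤
          C' * (dbar x x') ^ ((1:ℝ)/3) + C' * (dbar y y') ^ ((1:ℝ)/3) +
            C' * Real.sqrt |t - t'| := by
  intro A
  have hC0 : (0:ℝ) < C := lt_of_lt_of_le one_pos hC
  -- pointwise comparison bound
  have hpt : ∀ (x y : X), ∀ t ∈ Set.Icc (0:ℝ) 1, ∀ s ∈ Set.Icc (0:ℝ) 1,
      d t x y ≤ (1 + C) * d s x y + C := by
    intro x y t ht s hs
    have h1 := hHolder x y t ht s hs
    have hts : |t - s| ≤ 1 := by
      rw [abs_sub_le_iff]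
      constructor <;> linarith [ht.1, ht.2, hs.1, hs.2]
    have hsq : Real.sqrt |t - s| ≤ 1 := by
      simpa using Real.sqrt_le_sqrt hts
    have hmin : min (d t x y) (d s x y) ≤ d s x y := min_le_right _ _
    have hmin0 : 0 ≤ min (d t x y) (d s x y) :=
      le_min (hnonneg t ht x y) (hnonneg s hs x y)
    have h2 : C * (1 + min (d t x y) (d s x y)) * Real.sqrt |t - s|
        ≤ C * (1 + d s x y) := by
      have h3 : C * (1 + min (d t x y) (d s x y)) ≤ C * (1 + d s x y) := by
        nlinarith
      nlinarith [Real.sqrt_nonneg |t - s|, mul_nonneg hC0.le (by linarith : (0:ℝ) ≤ 1 + min (d t x y) (d s x y))]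
    have h4 : d t x y - d s x y ≤ |d t x y - d s x y| := le_abs_self _
    nlinarith
  -- integrability
  have hInt : ∀ x y : X, IntegrableOn (fun t => d t x y) (Set.Ioc (0:ℝ) 1) := by
    intro x y
    apply Integrable.mono' (integrable_const ((1 + C) * d 0 x y + C))
      ((hmeas x y).aestronglyMeasurable)
    filter_upwards [ae_restrict_mem measurableSet_Ioc] with t ht
    rw [Real.norm_eq_abs, abs_of_nonneg (hnonneg t (Ioc_subset_Icc_self ht) x y)]
    exact hpt x y t (Ioc_subset_Icc_self ht) 0 (by norm_num)
  have hII : ∀ x y : X, IntervalIntegrable (fun t => d t x y) volume 0 1 := by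
    intro x y
    rw [intervalIntegrable_iff_integrableOn_Ioc_of_le (by norm_num)]
    exact hInt x y
  have hdbar_set : ∀ x y : X, dbar x y = ∫ t in Set.Ioc (0:ℝ) 1, d t x y := by
    intro x y
    rw [hdbar, intervalIntegral.integral_of_le (by norm_num)]
  have hdnn : ∀ x y : X, 0 ≤ dbar x y := by
    intro x y
    rw [hdbar]
    exact intervalIntegral.integral_nonneg (by norm_num)
      (fun u hu => hnonneg u hu x y)
  -- sup bound
  have hsup : ∀ (x y : X), ∀ t ∈ Set.Icc (0:ℝ) 1, d t x y ≤ (1 + C) * dbar x y + C := by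
    intro x y t ht
    have h1 : d t x y = ∫ s in (0:ℝ)..1, d t x y := by simp
    rw [h1, hdbar]
    have h2 : IntervalIntegrable (fun s => (1 + C) * d s x y + C) volume 0 1 :=
      ((hII x y).const_mul _).add intervalIntegrable_const
    calc (∫ _ in (0:ℝ)..1, d t x y) ≤ ∫ s in (0:ℝ)..1, ((1 + C) * d s x y + C) := by
          apply intervalIntegral.integral_mono_on (by norm_num) intervalIntegrable_const h2
          intro s hs
          exact hpt x y t ht s hs
      _ = (1 + C) * (∫ s in (0:ℝ)..1, d s x y) + C := by
          rw [intervalIntegral.integral_add ((hII x y).const_mul _) intervalIntegrable_const,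
            intervalIntegral.integral_const_mul]
          simp
  -- averaging: find a good time s near t'
  have havg : ∀ (u v : X), ∀ t' ∈ Set.Icc (0:ℝ) 1, ∀ δ : ℝ, 0 < δ → δ ≤ 1 →
      ∃ s ∈ Set.Icc (0:ℝ) 1, |s - t'| ≤ δ ∧ d s u v ≤ dbar u v / δ := by
    intro u v t' ht' δ hδ0 hδ1
    set a := max (t' - δ) 0 with ha
    have ha0 : 0 ≤ a := le_max_right _ _
    have ha1 : a + δ ≤ 1 := by
      rcases max_cases (t' - δ) 0 with ⟨h, _⟩ | ⟨h, _⟩ <;> rw [ha, h] <;> linarith [ht'.2]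
    have hsub : Set.Ioc a (a + δ) ⊆ Set.Ioc (0:ℝ) 1 :=
      Set.Ioc_subset_Ioc (by linarith) ha1
    by_contra hcon
    push_neg at hcon
    have hgt : ∀ s ∈ Set.Ioc a (a + δ), dbar u v / δ < d s u v := by
      intro s hs
      have hsI : s ∈ Set.Icc (0:ℝ) 1 := Ioc_subset_Icc_self (hsub hs)
      have hclose : |s - t'| ≤ δ := by
        rw [abs_sub_le_iff]
        have h1 : t' - δ ≤ a := le_max_left _ _
        have h2 : a ≤ t' := by
          rcases max_cases (t' - δ) 0 with ⟨h, _⟩ | ⟨h, _⟩ <;> rw [ha, h] <;> linarith [ht'.1]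
        constructor <;> [linarith [hs.2]; linarith [hs.1]]
      exact hcon s hsI hclose
    -- integral over small interval exceeds dbar, contradiction
    have hIntJ : IntegrableOn (fun s => d s u v - dbar u v / δ) (Set.Ioc a (a + δ)) :=
      (((hInt u v).mono_set hsub)).sub (integrableOn_const measure_Ioc_lt_top.ne)
    have hpos : 0 < ∫ s in Set.Ioc a (a + δ), (d s u v - dbar u v / δ) := by
      rw [setIntegral_pos_iff_support_of_nonneg_ae _ hIntJ]
      · have : Set.Ioc a (a + δ) ⊆ Function.support (fun s => d s u v - dbar u v / δ) ∩ Set.Ioc a (a + δ) := by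
          intro s hs
          exact ⟨(sub_pos.2 (hgt s hs)).ne', hs⟩
        calc (0:ENNReal) < volume (Set.Ioc a (a + δ)) := by
              simp [Real.volume_Ioc]
              linarith
          _ ≤ _ := measure_mono this
      · filter_upwards [ae_restrict_mem measurableSet_Ioc] with s hs
        have := hgt s hs
        simp only [Pi.zero_apply]
        linarith
    have hsplit : (∫ s in Set.Ioc a (a + δ), (d s u v - dbar u v / δ))
        = (∫ s in Set.Ioc a (a + δ), d s u v) - dbar u v := by
      rw [integral_sub ((hInt u v).mono_set hsub) (integrableOn_const measure_Ioc_lt_top.ne),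
        setIntegral_const]
      have : (volume (Set.Ioc a (a + δ))).toReal = δ := by
        rw [Real.volume_Ioc]
        rw [ENNReal.toReal_ofReal (by linarith)]
        ring
      rw [measureReal_def, this, smul_eq_mul]
      field_simp
    have hle : (∫ s in Set.Ioc a (a + δ), d s u v) ≤ dbar u v := by
      rw [hdbar_set]
      apply setIntegral_mono_set (hInt u v)
      · filter_upwards [ae_restrict_mem measurableSet_Ioc] with s hs
        exact hnonneg s (Ioc_subset_Icc_self hs) u v
      · exact Filter.Eventually.of_forall hsub
    rw [hsplit] at hpos
    linarith
  rcases le_or_gt A 0 with hA | hA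
  · refine ⟨1, one_pos, ?_⟩
    intro x y x' y' t ht t' ht' hlt
    exact absurd hlt (not_lt.2 (le_trans hA
      (by have := hdnn x y; have := hdnn x x'; have := hdnn y y'; linarith)))
  · set K := max (1 + 2*C) ((1+C)*A + C) with hK
    have hK1 : (1:ℝ) ≤ K := le_trans (by linarith) (le_max_left _ _)
    have hK2 : (1+C)*A + C ≤ K := le_max_right _ _
    have hK3 : 1 + 2*C ≤ K := le_max_left _ _
    -- key spatial decay estimate
    have hD : ∀ (u v : X), ∀ t' ∈ Set.Icc (0:ℝ) 1, dbar u v < A →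
        d t' u v ≤ K * (dbar u v) ^ ((1:ℝ)/3) := by
      intro u v t' ht' hlt
      have hb := hdnn u v
      rcases eq_or_lt_of_le hb with hb0 | hb0
      · -- dbar u v = 0
        have hε : ∀ ε : ℝ, 0 < ε → d t' u v ≤ ε := by
          intro ε hε
          have hεC : 0 < ε / C := div_pos hε hC0
          set δ := min ((ε/C)^2) 1 with hδdef
          have hδ0 : 0 < δ := lt_min (by positivity) one_pos
          have hδ1 : δ ≤ 1 := min_le_right _ _
          obtain ⟨s, hsI, hclose, hsmall⟩ := havg u v t' ht' δ hδ0 hδ1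
          have hds0 : d s u v = 0 := by
            have : dbar u v / δ = 0 := by rw [← hb0]; simp
            rw [this] at hsmall
            exact le_antisymm hsmall (hnonneg s hsI u v)
          have hH := hHolder u v t' ht' s hsI
          have hmin0 : 0 ≤ min (d t' u v) (d s u v) :=
            le_min (hnonneg t' ht' u v) (hnonneg s hsI u v)
          have hminle : min (d t' u v) (d s u v) ≤ 0 := by
            rw [← hds0]; exact min_le_right _ _
          have hsq1 : Real.sqrt |t' - s| ≤ Real.sqrt δ := by
            apply Real.sqrt_le_sqrt
            rw [abs_sub_comm]; exact hclose
          have hsq2 : Real.sqrt δ ≤ ε / C := by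
            calc Real.sqrt δ ≤ Real.sqrt ((ε/C)^2) :=
                  Real.sqrt_le_sqrt (min_le_left _ _)
              _ = ε / C := by rw [Real.sqrt_sq hεC.le]
          have e2 : C * (1 + min (d t' u v) (d s u v)) ≤ C := by nlinarith
          have e3 : C * (1 + min (d t' u v) (d s u v)) * Real.sqrt |t' - s|
              ≤ C * (ε / C) :=
            mul_le_mul e2 (le_trans hsq1 hsq2) (Real.sqrt_nonneg _) hC0.le
          have habs : d t' u v - d s u v ≤ |d t' u v - d s u v| := le_abs_self _
          have h6 : C * (ε / C) = ε := by field_simp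
          linarith
        have h0 : d t' u v ≤ 0 := by
          by_contra h
          push_neg at h
          have := hε (d t' u v / 2) (by linarith)
          linarith
        rw [← hb0, Real.zero_rpow (by norm_num : (1:ℝ)/3 ≠ 0), mul_zero]
        exact h0
      · rcases le_or_gt (dbar u v) 1 with hble | hbgt
        · -- 0 < dbar ≤ 1
          set b := dbar u v with hbdef
          have hδ0 : (0:ℝ) < b ^ ((2:ℝ)/3) := Real.rpow_pos_of_pos hb0 _
          have hδ1 : b ^ ((2:ℝ)/3) ≤ 1 := Real.rpow_le_one hb hble (by norm_num)
          obtain ⟨s, hsI, hclose, hsmall⟩ := havg u v t' ht' _ hδ0 hδ1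
          have hq : b / b ^ ((2:ℝ)/3) = b ^ ((1:ℝ)/3) := by
            rw [show (1:ℝ)/3 = 1 - 2/3 by norm_num, Real.rpow_sub hb0, Real.rpow_one]
          have hsd : Real.sqrt (b ^ ((2:ℝ)/3)) = b ^ ((1:ℝ)/3) := by
            rw [Real.sqrt_eq_rpow, ← Real.rpow_mul hb]
            norm_num
          have hds : d s u v ≤ b ^ ((1:ℝ)/3) := by rw [← hq]; exact hsmall
          have h13 : b ^ ((1:ℝ)/3) ≤ 1 := Real.rpow_le_one hb hble (by norm_num)
          have h13n : 0 ≤ b ^ ((1:ℝ)/3) := Real.rpow_nonneg hb _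
          have hH := hHolder u v t' ht' s hsI
          have hmin0 : 0 ≤ min (d t' u v) (d s u v) :=
            le_min (hnonneg t' ht' u v) (hnonneg s hsI u v)
          have hminle : min (d t' u v) (d s u v) ≤ d s u v := min_le_right _ _
          have e1 : Real.sqrt |t' - s| ≤ b ^ ((1:ℝ)/3) := by
            rw [← hsd]
            apply Real.sqrt_le_sqrt
            rw [abs_sub_comm]; exact hclose
          have e2 : C * (1 + min (d t' u v) (d s u v)) ≤ C * 2 := by nlinarith
          have e3 : C * (1 + min (d t' u v) (d s u v)) * Real.sqrt |t' - s|
              ≤ C * 2 * b ^ ((1:ℝ)/3) :=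
            mul_le_mul e2 e1 (Real.sqrt_nonneg _) (by positivity)
          have : d t' u v - d s u v ≤ |d t' u v - d s u v| := le_abs_self _
          nlinarith
        · -- dbar > 1
          have h1 : d t' u v ≤ (1+C)*dbar u v + C := hsup u v t' ht'
          have h2 : (1+C)*dbar u v + C ≤ (1+C)*A + C := by nlinarith
          have h3 : (1:ℝ) ≤ (dbar u v) ^ ((1:ℝ)/3) :=
            Real.one_le_rpow hbgt.le (by norm_num)
          nlinarith
    -- the final constant
    refine ⟨max K (C * (1 + ((1+C)*A + C))), lt_of_lt_of_le one_pos (le_trans hK1 (le_max_left _ _)), ?_⟩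
    intro x y x' y' t ht t' ht' hlt
    set C' := max K (C * (1 + ((1+C)*A + C))) with hC'
    have hC'K : K ≤ C' := le_max_left _ _
    have hC'T : C * (1 + ((1+C)*A + C)) ≤ C' := le_max_right _ _
    have hxy : dbar x y < A := by
      have := hdnn x x'; have := hdnn y y'; linarith
    have hxx' : dbar x x' < A := by
      have := hdnn x y; have := hdnn y y'; linarith
    have hyy' : dbar y y' < A := by
      have := hdnn x y; have := hdnn x x'; linarith
    -- time variation
    have hM : d t x y ≤ (1+C)*A + C := by
      have := hsup x y t ht
      nlinarith
    have htime : |d t x y - d t' x y| ≤ C' * Real.sqrt |t - t'| := by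
      have hH := hHolder x y t ht t' ht'
      have hmin0 : 0 ≤ min (d t x y) (d t' x y) :=
        le_min (hnonneg t ht x y) (hnonneg t' ht' x y)
      have hminle : min (d t x y) (d t' x y) ≤ d t x y := min_le_left _ _
      have e2 : C * (1 + min (d t x y) (d t' x y)) ≤ C' := by nlinarith
      calc |d t x y - d t' x y| ≤ C * (1 + min (d t x y) (d t' x y)) * Real.sqrt |t - t'| := hH
        _ ≤ C' * Real.sqrt |t - t'| :=
            mul_le_mul_of_nonneg_right e2 (Real.sqrt_nonneg _)
    -- spatial variation
    have hquad : |d t' x y - d t' x' y'| ≤ d t' x x' + d t' y y' := by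
      rw [abs_sub_le_iff]
      constructor
      · linarith [htriangle t' ht' x x' y, htriangle t' ht' x' y' y, hsymm t' ht' y' y]
      · linarith [htriangle t' ht' x' x y', htriangle t' ht' x y y', hsymm t' ht' x' x]
    have hx' : d t' x x' ≤ C' * (dbar x x') ^ ((1:ℝ)/3) := by
      refine le_trans (hD x x' t' ht' hxx') ?_
      exact mul_le_mul_of_nonneg_right hC'K (Real.rpow_nonneg (hdnn x x') _)
    have hy' : d t' y y' ≤ C' * (dbar y y') ^ ((1:ℝ)/3) := by
      refine le_trans (hD y y' t' ht' hyy') ?_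
      exact mul_le_mul_of_nonneg_right hC'K (Real.rpow_nonneg (hdnn y y') _)
    calc |d t x y - d t' x' y'| ≤ |d t x y - d t' x y| + |d t' x y - d t' x' y'| :=
          abs_sub_le _ _ _
      _ ≤ C' * Real.sqrt |t - t'| + (d t' x x' + d t' y y') := by linarith
      _ ≤ C' * (dbar x x') ^ ((1:ℝ)/3) + C' * (dbar y y') ^ ((1:ℝ)/3) +
            C' * Real.sqrt |t - t'| := by linarith
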